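/- arXiv:2307.15808 — 3 statements merged into one kernel-verified Lean document; each statement's English description precedes it below -/
import Mathlib

section
/- For all d > 0, v > 1, u1 with 0 ≤ u1 < 1 ≤ v, and u2 with 0 < u2 ≤ v, the quantity (2dv² + 2d·u2·v + d·u1·v² + d·u1·v + d·u2·v² + d·v·u2)/(2·u2·v·(v - u1)) is minimized (over admissible u1, u2) at u1 = 0, u2 = v, where it equals d(v+5)/(2v). -/
theorem stmt2 (d v : ℝ) (hd : 0 < d) (hv : 1 < v) :
    (∀ u1 u2 : ℝ, 0 ≤ u1 → u1 < 1 → 0 < u2 → u2 ≤ v →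
      d * (v + 5) / (2 * v) ≤
        (2*d*v^2 + 2*d*u2*v + d*u1*v^2 + d*u1*v + d*u2*v^2 + d*v*u2) /
          (2*u2*v*(v - u1))) ∧
    (2*d*v^2 + 2*d*v*v + d*0*v^2 + d*0*v + d*v*v^2 + d*v*v) /
      (2*v*v*(v - 0)) = d * (v + 5) / (2 * v) := by
  have hv0 : 0 < v := by linarith
  constructor
  · intro u1 u2 h1 h2 h3 h4
    have hvu : 0 < v - u1 := by linarith
    rw [div_le_div_iff₀ (by positivity) (by positivity)]
    nlinarith [mul_pos h3 hvu, mul_nonneg h1 h3.le, mul_nonneg (mul_nonneg h1 h3.le) hv0.le,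
      mul_nonneg (sub_nonneg.2 h4) hvu.le, mul_pos hd hv0,
      mul_nonneg (mul_nonneg hd.le hv0.le) (mul_nonneg (sub_nonneg.2 h4) hvu.le),
      mul_nonneg (mul_nonneg hd.le hv0.le) (mul_nonneg h1 h3.le)]
  · field_simp [hv0.ne']
    ring
end

section
/- Let 1 ≤ v ≤ 3 and u1 = (-(7v+v²) + v·√(v²+30v+97))/(2v+6). Then 0 < u1 ≤ 1. -/
theorem stmt5 (v : ℝ) (hv1 : 1 ≤ v) (hv3 : v ≤ 3) :
    let u1 := (-(7*v + v^2) + v * Real.sqrt (v^2 + 30*v + 97)) / (2*v + 6)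
    0 < u1 ∧ u1 ≤ 1 := by
  intro u1
  set s := Real.sqrt (v^2 + 30*v + 97) with hs
  have hden : 0 < 2*v + 6 := by linarith
  have hlow : 7 + v < s := by
    rw [hs]
    rw [show (7:ℝ) + v = Real.sqrt ((7+v)^2) from (Real.sqrt_sq (by linarith)).symm]
    apply Real.sqrt_lt_sqrt (by positivity)
    nlinarith
  have hup : v * s ≤ v^2 + 9*v + 6 := by
    have h1 : v * s = Real.sqrt (v^2 * (v^2 + 30*v + 97)) := by
      rw [hs, Real.sqrt_mul (by positivity), Real.sqrt_sq (by linarith)]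
    rw [h1]
    calc Real.sqrt (v^2 * (v^2 + 30*v + 97)) ≤ Real.sqrt ((v^2 + 9*v + 6)^2) := by
          apply Real.sqrt_le_sqrt; nlinarith [sq_nonneg (v-3), sq_nonneg (v+3)]
      _ = v^2 + 9*v + 6 := Real.sqrt_sq (by nlinarith)
  constructor
  · apply div_pos _ hden
    nlinarith
  · rw [div_le_one hden]
    nlinarith
end

section
/- Let v > 1, d > 0, and k a natural number with 2^(k-2) < d ≤ 2^k (k ≥ 2). Then 2·(2^0 + 2^1 + ⋯ + 2^(k-1))/v + d − x + x/v ≤ 9d/v + d/2 − d/(2v²), where x = d/2 − d/(2v). -/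
theorem stmt11 (v d : ℝ) (hv : 1 < v) (hd : 0 < d) (k : ℕ) (hk : 2 ≤ k)
    (h1 : (2:ℝ)^(k-2) < d) (h2 : d ≤ (2:ℝ)^k) :
    let x := d / 2 - d / (2*v)
    2 * (∑ j ∈ Finset.range k, (2:ℝ)^j) / v + d - x + x / v ≤
      9*d/v + d/2 - d/(2*v^2) := by
  intro x
  have hv0 : (0:ℝ) < v := lt_trans one_pos hv
  have hsum : (∑ j ∈ Finset.range k, (2:ℝ)^j) = 2^k - 1 := by
    rw [geom_sum_eq (by norm_num)]; ring
  have hpow : (2:ℝ)^k = 4 * 2^(k-2) := by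
    rw [show k = (k-2) + 2 from (Nat.sub_add_cancel hk).symm]
    ring_nf
    rw [Nat.add_sub_cancel_left]
  have h4 : (2:ℝ)^k < 4*d := by rw [hpow]; linarith
  show 2 * (∑ j ∈ Finset.range k, (2:ℝ)^j) / v + d - x + x / v ≤ _
  rw [hsum]
  have hx : x = d / 2 - d / (2*v) := rfl
  rw [hx]
  have hvne : v ≠ 0 := ne_of_gt hv0
  rw [← sub_nonneg]
  have key : 9*d/v + d/2 - d/(2*v^2) - (2 * (2 ^ k - 1) / v + d - (d / 2 - d / (2 * v)) + (d / 2 - d / (2 * v)) / v) = (8*d - 2*2^k + 2)/v := by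
    field_simp
    ring
  rw [key]
  apply div_nonneg _ (le_of_lt hv0)
  linarith
end
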